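/- Let F be a field, let 1 ≤ k ≤ n, and let V ∈ F^{k×n} be an MDS matrix, i.e. every k columns of V are linearly independent. Fix ℓ ≥ 2. For σ ∈ {0,…,k} let R_{≤σ} ⊆ F^n denote the span of the first σ rows of V, and for A ⊆ {1,…,n} let E_A ⊆ F^n denote the span of the standard basis vectors indexed by A. Assume that for every σ_1,…,σ_ℓ ∈ {0,…,k} and A_1,…,A_ℓ ⊆ {1,…,n} with σ_i + |A_i| ≤ n for all i, the dimension of ⋂_{i=1}^ℓ (R_{≤σ_i} + E_{A_i}) equals gid_n((σ_i,A_i)_i) (i.e. the pair (Vᵀ, I_n) is MDSb(ℓ)). Then every dual matrix Q ∈ F^{(n−k)×n} of V (rank n−k with V · Qᵀ = 0) satisfies: for every family A_1,…,A_ℓ of subsets of {1,…,n} with |A_i| ≤ n−k, with |A_1| + ⋯ + |A_ℓ| = (ℓ−1)·(n−k), and having the dimension-(n−k) null intersection property, the intersection Q_{A_1} ∩ ⋯ ∩ Q_{A_ℓ} of the column-span subspaces is zero. -/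

import Mathlib

open Finset Matrix

noncomputable section

/-- The intersection `⋂_{j ∈ p} A j`, as a `Finset (Fin n)`. -/
def interSet {ℓ n : ℕ} (A : Fin ℓ → Finset (Fin n)) (p : Finset (Fin ℓ)) : Finset (Fin n) :=
  Finset.univ.filter fun x => ∀ j ∈ p, x ∈ A j

/-- The dimension-`m` null intersection property: for every partition of `{1,…,ℓ}`
(presented as a `Finpartition` of `Finset.univ : Finset (Fin ℓ)`) into nonempty parts
`P_1,…,P_s`, we have `Σ_i |⋂_{j ∈ P_i} A_j| ≤ (s-1)·m`. -/
def NullInter {ℓ n : ℕ} (m : ℕ) (A : Fin ℓ → Finset (Fin n)) : Prop :=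
  ∀ P : Finpartition (Finset.univ : Finset (Fin ℓ)),
    ∑ p ∈ P.parts, (interSet A p).card ≤ (P.parts.card - 1) * m

/-- Span of the columns of `M` indexed by `A`. -/
def colSpan {K : Type*} [Field K] {k n : ℕ} (M : Matrix (Fin k) (Fin n) K)
    (A : Finset (Fin n)) : Submodule K (Fin k → K) :=
  Submodule.span K ((fun j i => M i j) '' (A : Set (Fin n)))

/-- Span of the first `σ` columns of `M`. -/
def colSpanLT {K : Type*} [Field K] {k b : ℕ} (M : Matrix (Fin k) (Fin b) K)
    (σ : ℕ) : Submodule K (Fin k → K) :=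
  Submodule.span K ((fun j i => M i j) '' {j : Fin b | (j : ℕ) < σ})

/-- The minimum of `σ` over the set `p` (for nonempty `p`, this is `min_{j ∈ p} σ j`). -/
def partMin {ℓ : ℕ} (σ : Fin ℓ → ℕ) (p : Finset (Fin ℓ)) : ℕ :=
  sInf (σ '' (p : Set (Fin ℓ)))

/-- The generic intersection dimension `gid_m((σ_i, A_i)_i)`: the maximum over all
partitions of `{1,…,ℓ}` into nonempty parts `P_1,…,P_s` of
`-m(s-1) + Σ_i (min_{j ∈ P_i} σ_j + |⋂_{j ∈ P_i} A_j|)`. -/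
def gid {ℓ n : ℕ} (m : ℕ) (σ : Fin ℓ → ℕ) (A : Fin ℓ → Finset (Fin n)) : ℤ :=
  sSup { v : ℤ | ∃ P : Finpartition (Finset.univ : Finset (Fin ℓ)),
    v = -(m : ℤ) * ((P.parts.card : ℤ) - 1)
      + ∑ p ∈ P.parts, ((partMin σ p : ℤ) + ((interSet A p).card : ℤ)) }

/-- `V` is MDS: every `k` columns of `V` are linearly independent. -/
def IsMDS {F : Type*} [Field F] {k n : ℕ} (V : Matrix (Fin k) (Fin n) F) : Prop :=
  ∀ S : Finset (Fin n), S.card = k →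
    LinearIndependent F (fun j : S => fun i => V i (j : Fin n))

lemma interSet_singleton {ℓ n : ℕ} (A : Fin ℓ → Finset (Fin n)) (i : Fin ℓ) :
    interSet A {i} = A i := by
  ext x; simp [interSet]

lemma partMin_const {ℓ : ℕ} (c : ℕ) {p : Finset (Fin ℓ)} (hp : p.Nonempty) :
    partMin (fun _ => c) p = c := by
  unfold partMin
  rw [Set.Nonempty.image_const (Finset.coe_nonempty.2 hp) c]
  exact csInf_singleton c

/-- The value of `gid n (const k)` under the hypotheses of the theorem. -/
lemma gid_const_eq {F : Type*} [Field F] {k n ℓ : ℕ} (hkn : k ≤ n) (hℓ : 2 ≤ ℓ)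
    (A : Fin ℓ → Finset (Fin n))
    (hsum : (∑ i, (A i).card) = (ℓ - 1) * (n - k))
    (hNI : NullInter (n - k) A) :
    gid n (fun _ => k) A = (k : ℤ) := by
  haveI : NeZero ℓ := ⟨by omega⟩
  have huniv : (Finset.univ : Finset (Fin ℓ)).Nonempty := Finset.univ_nonempty
  -- the upper bound, valid for every partition
  have hub : ∀ v ∈ { v : ℤ | ∃ P : Finpartition (Finset.univ : Finset (Fin ℓ)),
      v = -(n : ℤ) * ((P.parts.card : ℤ) - 1)
        + ∑ p ∈ P.parts, ((partMin (fun _ => k) p : ℤ) + ((interSet A p).card : ℤ)) },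
      v ≤ (k : ℤ) := by
    rintro v ⟨P, rfl⟩
    have hsP : 1 ≤ P.parts.card := by
      have := P.parts_nonempty huniv.ne_empty
      exact Finset.card_pos.2 this
    have hmin : ∀ p ∈ P.parts, (partMin (fun _ => k) p : ℤ) = (k : ℤ) := by
      intro p hp
      rw [partMin_const k (P.nonempty_of_mem_parts hp)]
    have hNIP := hNI P
    have hNIZ : (∑ p ∈ P.parts, ((interSet A p).card : ℤ)) ≤
        ((P.parts.card : ℤ) - 1) * ((n : ℤ) - (k : ℤ)) := by
      have : ((∑ p ∈ P.parts, (interSet A p).card : ℕ) : ℤ) ≤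
          (((P.parts.card - 1) * (n - k) : ℕ) : ℤ) := by exact_mod_cast hNIP
      push_cast [Nat.cast_sub hsP, Nat.cast_sub hkn] at this
      simpa using this
    rw [Finset.sum_congr rfl (fun p hp => by rw [hmin p hp]), Finset.sum_add_distrib,
      Finset.sum_const, nsmul_eq_mul]
    have hkey : -(n : ℤ) * ((P.parts.card : ℤ) - 1) + ((P.parts.card : ℤ) * (k : ℤ)
        + ((P.parts.card : ℤ) - 1) * ((n : ℤ) - (k : ℤ))) = (k : ℤ) := by ring
    linarith
  -- the discrete partition attains the value k
  have hmem : (k : ℤ) ∈ { v : ℤ | ∃ P : Finpartition (Finset.univ : Finset (Fin ℓ)),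
      v = -(n : ℤ) * ((P.parts.card : ℤ) - 1)
        + ∑ p ∈ P.parts, ((partMin (fun _ => k) p : ℤ) + ((interSet A p).card : ℤ)) } := by
    refine ⟨⊥, ?_⟩
    have hcards : ((⊥ : Finpartition (Finset.univ : Finset (Fin ℓ))).parts.card : ℤ)
        = (ℓ : ℤ) := by
      rw [Finpartition.card_bot]
      simp
    have hsum2 : ∑ p ∈ (⊥ : Finpartition (Finset.univ : Finset (Fin ℓ))).parts,
        ((partMin (fun _ => k) p : ℤ) + ((interSet A p).card : ℤ))
        = ∑ i : Fin ℓ, ((k : ℤ) + ((A i).card : ℤ)) := by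
      rw [Finpartition.parts_bot, Finset.sum_map]
      refine Finset.sum_congr rfl fun i _ => ?_
      rw [show (⟨singleton, Finset.singleton_injective⟩ : Fin ℓ ↪ Finset (Fin ℓ)) i = {i}
        from rfl]
      rw [partMin_const k (Finset.singleton_nonempty i), interSet_singleton]
    rw [hcards, hsum2, Finset.sum_add_distrib, Finset.sum_const, nsmul_eq_mul]
    have hsumZ : (∑ i : Fin ℓ, ((A i).card : ℤ)) = ((ℓ : ℤ) - 1) * ((n : ℤ) - (k : ℤ)) := by
      have : ((∑ i, (A i).card : ℕ) : ℤ) = (((ℓ - 1) * (n - k) : ℕ) : ℤ) := by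
        exact_mod_cast hsum
      push_cast [Nat.cast_sub (by omega : 1 ≤ ℓ), Nat.cast_sub hkn] at this
      simpa using this
    rw [hsumZ]
    simp [Finset.card_univ]
    ring
  unfold gid
  exact le_antisymm (csSup_le ⟨_, hmem⟩ hub) (le_csSup ⟨(k : ℤ), hub⟩ hmem)

set_option maxHeartbeats 1000000 in
set_option synthInstance.maxHeartbeats 200000 in
/-- If `V` is MDS and `(Vᵀ, I_n)` is `MDSb(ℓ)`, then every dual matrix `Q` of `V`
is `MDS(ℓ)`; that is, `V` is `LD-MDS(≤ ℓ-1)`. -/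
theorem MDSb_transpose_implies_dual_MDS
    (F : Type*) [Field F] (k n : ℕ) (hk : 1 ≤ k) (hkn : k ≤ n)
    (V : Matrix (Fin k) (Fin n) F) (hMDS : IsMDS V)
    (ℓ : ℕ) (hℓ : 2 ≤ ℓ)
    (hMDSb : ∀ (σ : Fin ℓ → ℕ) (A : Fin ℓ → Finset (Fin n)),
      (∀ i, σ i ≤ k) → (∀ i, σ i + (A i).card ≤ n) →
      (Module.finrank F
        ↥(⨅ i, colSpanLT Vᵀ (σ i) ⊔
            colSpan (1 : Matrix (Fin n) (Fin n) F) (A i)) : ℤ) = gid n σ A) :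
    ∀ Q : Matrix (Fin (n - k)) (Fin n) F, Q.rank = n - k → V * Qᵀ = 0 →
      ∀ A : Fin ℓ → Finset (Fin n),
        (∀ i, (A i).card ≤ n - k) →
        (∑ i, (A i).card) = (ℓ - 1) * (n - k) →
        NullInter (n - k) A →
        (⨅ i, colSpan Q (A i)) = ⊥ := by
  intro Q hQrank hVQ A hcard hsum hNI
  set f : (Fin n → F) →ₗ[F] (Fin (n - k) → F) := Q.mulVecLin with hf
  -- Q * Vᵀ = 0
  have hQV : Q * Vᵀ = 0 := by
    have := congrArg Matrix.transpose hVQ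
    rwa [Matrix.transpose_mul, Matrix.transpose_transpose, Matrix.transpose_zero] at this
  -- colSpanLT Vᵀ k is the row space of V
  have hR : colSpanLT Vᵀ k = LinearMap.range (Vᵀ.mulVecLin) := by
    rw [Matrix.range_mulVecLin]
    unfold colSpanLT
    congr 1
    have h1 : {j : Fin k | (j : ℕ) < k} = Set.univ := by
      ext j; simp [j.isLt]
    rw [h1, Set.image_univ]
    rfl
  -- rank of V is k
  have hrankV : V.rank = k := by
    refine le_antisymm (by simpa using V.rank_le_card_height) ?_
    set S : Finset (Fin n) := Finset.univ.map (Fin.castLEEmb hkn) with hS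
    have hScard : S.card = k := by simp [hS]
    have hli := hMDS S hScard
    have h1 : Module.finrank F
        (Submodule.span F (Set.range fun j : S => fun i => V i (j : Fin n))) = k := by
      rw [finrank_span_eq_card hli]
      simp [Fintype.card_coe, hScard]
    have h2 : Submodule.span F (Set.range fun j : S => fun i => V i (j : Fin n)) ≤
        LinearMap.range V.mulVecLin := by
      rw [Matrix.range_mulVecLin]
      apply Submodule.span_mono
      rintro _ ⟨j, rfl⟩
      exact ⟨(j : Fin n), rfl⟩
    calc k = _ := h1.symm
      _ ≤ Module.finrank F (LinearMap.range V.mulVecLin) := Submodule.finrank_mono h2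
      _ = V.rank := rfl
  -- finrank of colSpanLT Vᵀ k is k
  have hfrR : Module.finrank F (colSpanLT Vᵀ (k : ℕ) : Submodule F (Fin n → F)) = k := by
    rw [hR]
    have : Vᵀ.rank = k := by rw [Matrix.rank_transpose, hrankV]
    exact this
  -- ker f = colSpanLT Vᵀ k
  have hle : colSpanLT Vᵀ (k : ℕ) ≤ LinearMap.ker f := by
    rw [hR]
    rintro x ⟨c, rfl⟩
    show Q.mulVec (Vᵀ.mulVec c) = 0
    rw [Matrix.mulVec_mulVec, hQV, Matrix.zero_mulVec]
  have hfrker : Module.finrank F (LinearMap.ker f : Submodule F (Fin n → F)) = k := by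
    have h1 := LinearMap.finrank_range_add_finrank_ker f
    have h2 : Module.finrank F (LinearMap.range f) = n - k := hQrank
    have h3 : Module.finrank F (Fin n → F) = n := by simp
    omega
  have hker : LinearMap.ker f = colSpanLT Vᵀ (k : ℕ) :=
    (Submodule.eq_of_le_of_finrank_eq hle (by rw [hfrR, hfrker])).symm
  -- f is surjective
  have hsurj : LinearMap.range f = ⊤ := by
    apply Submodule.eq_top_of_finrank_eq
    rw [show Module.finrank F (LinearMap.range f) = n - k from hQrank]
    simp
  -- map f (colSpan 1 (A i)) = colSpan Q (A i)
  have hmap : ∀ i, Submodule.map f (colSpan (1 : Matrix (Fin n) (Fin n) F) (A i))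
      = colSpan Q (A i) := by
    intro i
    unfold colSpan
    rw [Submodule.map_span, ← Set.image_comp]
    congr 1
    apply Set.image_congr
    intro j _
    funext i'
    show Q.mulVec (fun i'' => (1 : Matrix (Fin n) (Fin n) F) i'' j) i' = Q i' j
    simp [Matrix.mulVec, dotProduct, Matrix.one_apply, mul_ite]
  -- comap f (colSpan Q (A i)) = colSpanLT Vᵀ k ⊔ colSpan 1 (A i)
  have hcomap : ∀ i, Submodule.comap f (colSpan Q (A i))
      = colSpanLT Vᵀ (k : ℕ) ⊔ colSpan (1 : Matrix (Fin n) (Fin n) F) (A i) := by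
    intro i
    rw [← hmap i, Submodule.comap_map_eq, hker, sup_comm]
  set W : Submodule F (Fin (n - k) → F) := ⨅ i, colSpan Q (A i) with hW
  have hT : (⨅ i, colSpanLT Vᵀ (k : ℕ) ⊔ colSpan (1 : Matrix (Fin n) (Fin n) F) (A i))
      = Submodule.comap f W := by
    rw [hW, Submodule.comap_iInf]
    exact iInf_congr fun i => (hcomap i).symm
  -- the finrank of the comap is k via the MDSb hypothesis
  have hgid := gid_const_eq (F := F) hkn hℓ A hsum hNI
  have hfrT : Module.finrank F (Submodule.comap f W : Submodule F (Fin n → F)) = k := by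
    have h := hMDSb (fun _ => k) A (fun _ => le_rfl)
      (fun i => by show k + (A i).card ≤ n; have := hcard i; omega)
    rw [hgid] at h
    have h2 : Module.finrank F
        ↥(⨅ i, colSpanLT Vᵀ (k : ℕ) ⊔ colSpan (1 : Matrix (Fin n) (Fin n) F) (A i)) = k := by
      exact_mod_cast h
    rwa [hT] at h2
  -- rank-nullity on the restriction of f to comap f W
  have hkerle : LinearMap.ker f ≤ Submodule.comap f W := by
    intro x hx
    simp only [Submodule.mem_comap, LinearMap.mem_ker.1 hx]
    exact W.zero_mem
  have hrn := LinearMap.finrank_range_add_finrank_ker (f.domRestrict (Submodule.comap f W))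
  rw [LinearMap.range_domRestrict] at hrn
  have hmapW : Submodule.map f (Submodule.comap f W) = W := by
    rw [Submodule.map_comap_eq, hsurj, top_inf_eq]
  rw [hmapW] at hrn
  have hkerd : Module.finrank F (LinearMap.ker (f.domRestrict (Submodule.comap f W))) = k := by
    rw [LinearMap.ker_domRestrict]
    rw [(Submodule.comapSubtypeEquivOfLe hkerle).finrank_eq]
    exact hfrker
  rw [hkerd, hfrT] at hrn
  have : Module.finrank F W = 0 := by omega
  exact Submodule.finrank_eq_zero.1 this
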